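/- Let J and J̊ be two two-sided Jacobi operators on ℓ²(ℤ): bounded self-adjoint operators with J e_n = a(n) e_{n−1} + b(n) e_n + a(n+1) e_{n+1} and J̊ e_n = å(n) e_{n−1} + b̊(n) e_n + å(n+1) e_{n+1}, where a, å, b, b̊ : ℤ → ℝ are bounded and a(n), å(n) > 0. Let J₊, J̊₊ be their compressions to the closed span ℓ²₊ of {e_n : n ≥ 0}. Let c be real with c ∉ σ(J) ∪ σ(J₊) ∪ σ(J̊) ∪ σ(J̊₊); set r₊(c) = ⟨(J₊ − c)^{-1} e₀, e₀⟩, φ(c) = arctan r₊(c), κ_c = (J − c)^{-1}( a(0) sin φ(c)·e_{−1} + cos φ(c)·e₀ ), and analogously r̊₊(c), φ̊(c), κ̊_c for J̊. Then ⟨(J − J̊) κ_c, κ̊_c⟩ = sin( φ̊(c) − φ(c) ). -/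

import Mathlib

open scoped InnerProductSpace ComplexConjugate

/-- The Hilbert space `ℓ²(ℤ)` (with complex scalars). -/
noncomputable abbrev Hsp : Type := lp (fun _ : ℤ => ℂ) 2

/-- The standard orthonormal basis vector `e_n` of `ℓ²(ℤ)`. -/
noncomputable def eZ (n : ℤ) : Hsp := lp.single 2 n 1

/-- The closed subspace `ℓ²₊`, the closed span of `{e_n : n ≥ 0}`. -/
noncomputable def Hplus : Submodule ℂ Hsp :=
  (Submodule.span ℂ {x : Hsp | ∃ n : ℤ, 0 ≤ n ∧ x = eZ n}).topologicalClosure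

lemma inner_eZ (n : ℤ) (x : Hsp) : ⟪eZ n, x⟫_ℂ = x n := by
  simp [eZ, lp.inner_single_left]

lemma eZ_apply (m n : ℤ) : (eZ m : Hsp) n = if n = m then 1 else 0 := by
  simp [eZ, lp.single_apply, Pi.single_apply]

lemma eZ_mem_Hplus {n : ℤ} (hn : 0 ≤ n) : eZ n ∈ Hplus :=
  Submodule.le_topologicalClosure _ (Submodule.subset_span ⟨n, hn, rfl⟩)

lemma Hplus_apply_neg {x : Hsp} (hx : x ∈ Hplus) {n : ℤ} (hn : n < 0) : x n = 0 := by
  have hle : Hplus ≤ LinearMap.ker ((innerSL ℂ (eZ n) : Hsp →L[ℂ] ℂ) : Hsp →ₗ[ℂ] ℂ) := by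
    apply Submodule.topologicalClosure_minimal
    · rw [Submodule.span_le]
      rintro y ⟨m, hm, rfl⟩
      simp only [SetLike.mem_coe, LinearMap.mem_ker, ContinuousLinearMap.coe_coe,
        innerSL_apply_apply]
      rw [inner_eZ, eZ_apply]
      have : n ≠ m := by omega
      simp [this]
    · exact ContinuousLinearMap.isClosed_ker _
  have := hle hx
  simp only [LinearMap.mem_ker, ContinuousLinearMap.coe_coe, innerSL_apply_apply] at this
  rwa [inner_eZ] at this

set_option synthInstance.maxHeartbeats 1000000 in
set_option maxHeartbeats 2000000 in
lemma key_g (a b : ℤ → ℝ) (J : Hsp →L[ℂ] Hsp) (hJsa : IsSelfAdjoint J)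
    (hJ : ∀ n : ℤ, J (eZ n) =
      (a n : ℂ) • eZ (n - 1) + (b n : ℂ) • eZ n + (a (n + 1) : ℂ) • eZ (n + 1))
    (Jp : Hplus →L[ℂ] Hplus)
    (hJp : ∀ x y : Hplus, ⟪(Jp x : Hsp), (y : Hsp)⟫_ℂ = ⟪J (x : Hsp), (y : Hsp)⟫_ℂ)
    (f0 : Hplus) (hf0 : (f0 : Hsp) = eZ 0)
    (c : ℝ) (hcJp : (c : ℂ) ∉ spectrum ℂ Jp)
    (r : ℝ) (hr : (r : ℂ) = ⟪(Ring.inverse (Jp - (c : ℂ) • 1)) f0, f0⟫_ℂ)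
    (g : Hplus) (hg : g = Ring.inverse (Jp - (c : ℂ) • 1) f0) :
    (g : Hsp) 0 = (r : ℂ) ∧
    (J - (c : ℂ) • 1) (g : Hsp) = ((a 0 : ℂ) * (r : ℂ)) • eZ (-1) + eZ 0 := by
  -- the unit
  have hunit : IsUnit (Jp - (c : ℂ) • 1) := by
    rw [spectrum.notMem_iff] at hcJp
    have h2 := hcJp.neg
    rwa [neg_sub, Algebra.algebraMap_eq_smul_one] at h2
  have happ : (Jp - (c : ℂ) • 1) g = f0 := by
    rw [hg, ← ContinuousLinearMap.mul_apply, Ring.mul_inverse_cancel _ hunit,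
      ContinuousLinearMap.one_apply]
  -- g 0 = r
  have hg0 : (g : Hsp) 0 = (r : ℂ) := by
    have : ((r : ℝ) : ℂ) = ⟪(g : Hsp), (f0 : Hsp)⟫_ℂ := by
      rw [hr, hg]; exact (Submodule.coe_inner Hplus _ _)
    rw [hf0] at this
    have h2 : ((r : ℝ) : ℂ) = (starRingEnd ℂ) ((g : Hsp) 0) := by
      rw [this, ← inner_conj_symm, inner_eZ]
    have := congrArg (starRingEnd ℂ) h2
    simpa using this.symm
  refine ⟨hg0, ?_⟩
  -- components of J applied to elements of Hplus at nonneg indices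
  have hcompP : ∀ (x : Hplus) (n : ℤ), 0 ≤ n → (J (x : Hsp)) n = ((Jp x : Hsp)) n := by
    intro x n hn
    have := hJp x ⟨eZ n, eZ_mem_Hplus hn⟩
    have h2 := congrArg (starRingEnd ℂ) this
    rw [← inner_conj_symm, ← inner_conj_symm (J (x : Hsp))] at h2
    simp only [RingHom.injective (starRingEnd ℂ) |>.eq_iff] at h2  -- maybe fails
    rw [inner_eZ, inner_eZ] at h2
    exact h2.symm
  -- components of J applied to elements of Hplus at neg indices
  have hcompN : ∀ (x : Hplus) (n : ℤ),
      (J (x : Hsp)) n = (starRingEnd ℂ) (a n) * (x : Hsp) (n - 1)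
        + (starRingEnd ℂ) (b n) * (x : Hsp) n
        + (starRingEnd ℂ) (a (n + 1)) * (x : Hsp) (n + 1) := by
    intro x n
    have hs := hJsa.isSymmetric (eZ n) (x : Hsp)
    simp only [ContinuousLinearMap.coe_coe] at hs
    rw [← inner_eZ n (J (x : Hsp)), ← hs, hJ n, inner_add_left, inner_add_left,
      inner_smul_left, inner_smul_left, inner_smul_left, inner_eZ, inner_eZ, inner_eZ]
  refine lp.ext (funext fun n => ?_)
  have hGneg : ∀ m : ℤ, m < 0 → (g : Hsp) m = 0 := fun m hm => Hplus_apply_neg g.2 hm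
  simp only [ContinuousLinearMap.sub_apply, ContinuousLinearMap.smul_apply,
    ContinuousLinearMap.one_apply, lp.coeFn_sub, lp.coeFn_smul, Pi.sub_apply,
    Pi.smul_apply, lp.coeFn_add, Pi.add_apply, smul_eq_mul]
  rcases le_or_gt 0 n with hn | hn
  · rw [hcompP g n hn]
    have : ((Jp g : Hsp)) n - (c : ℂ) * (g : Hsp) n = (((Jp - (c : ℂ) • 1) g : Hplus) : Hsp) n := by
      simp [ContinuousLinearMap.sub_apply, ContinuousLinearMap.smul_apply,
        ContinuousLinearMap.one_apply, lp.coeFn_sub, Pi.sub_apply, lp.coeFn_smul]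
      exact (by rw [Submodule.coe_smul_of_tower, lp.coeFn_smul, Pi.smul_apply, Complex.real_smul] :
        (c : ℂ) * (g : Hsp) n = ((c • g : Hplus) : Hsp) n)
    rw [this, happ, hf0]
    have hne : n ≠ -1 := by omega
    simp [eZ_apply, hne]
  · rw [hcompN g n]
    rcases eq_or_lt_of_le (by omega : n ≤ -1) with h1 | h2
    · subst h1
      have e1 : (-1 : ℤ) - 1 = -2 := by norm_num
      have e2 : (-1 : ℤ) + 1 = 0 := by norm_num
      rw [e1, e2, hGneg (-1) (by norm_num), hGneg (-2) (by norm_num), hg0]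
      simp [eZ_apply, Complex.conj_ofReal]
    · have : n + 1 < 0 := by omega
      rw [hGneg n hn, hGneg (n-1) (by omega), hGneg (n+1) this]
      have h3 : n ≠ -1 := by omega
      have h4 : n ≠ 0 := by omega
      simp [eZ_apply, h3, h4]

lemma inner_eZ_right (n : ℤ) (x : Hsp) : ⟪x, eZ n⟫_ℂ = (starRingEnd ℂ) (x n) := by
  rw [← inner_conj_symm, inner_eZ]

set_option synthInstance.maxHeartbeats 1000000 in
set_option maxHeartbeats 2000000 in
/-- Let `J` and `J̊` be two two-sided Jacobi operators on `ℓ²(ℤ)`,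
`J₊`, `J̊₊` their compressions to `ℓ²₊`, and let `c` be real, outside all four spectra.
With `r₊(c), φ(c), κ_c` (resp. `r̊₊(c), φ̊(c), κ̊_c`) defined as usual, one has
`⟨(J − J̊)κ_c, κ̊_c⟩ = sin(φ̊(c) − φ(c))`. -/
theorem statement16
    (a b a2 b2 : ℤ → ℝ) (ha : ∀ n, 0 < a n) (ha2 : ∀ n, 0 < a2 n)
    (hbdd : ∃ C : ℝ, ∀ n, |a n| ≤ C ∧ |b n| ≤ C)
    (hbdd2 : ∃ C : ℝ, ∀ n, |a2 n| ≤ C ∧ |b2 n| ≤ C)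
    (J J2 : Hsp →L[ℂ] Hsp) (hJsa : IsSelfAdjoint J) (hJ2sa : IsSelfAdjoint J2)
    (hJ : ∀ n : ℤ, J (eZ n) =
      (a n : ℂ) • eZ (n - 1) + (b n : ℂ) • eZ n + (a (n + 1) : ℂ) • eZ (n + 1))
    (hJ2 : ∀ n : ℤ, J2 (eZ n) =
      (a2 n : ℂ) • eZ (n - 1) + (b2 n : ℂ) • eZ n + (a2 (n + 1) : ℂ) • eZ (n + 1))
    (Jp J2p : Hplus →L[ℂ] Hplus)
    (hJp : ∀ x y : Hplus, ⟪(Jp x : Hsp), (y : Hsp)⟫_ℂ = ⟪J (x : Hsp), (y : Hsp)⟫_ℂ)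
    (hJ2p : ∀ x y : Hplus, ⟪(J2p x : Hsp), (y : Hsp)⟫_ℂ = ⟪J2 (x : Hsp), (y : Hsp)⟫_ℂ)
    (f0 : Hplus) (hf0 : (f0 : Hsp) = eZ 0)
    (c : ℝ)
    (hcJ : (c : ℂ) ∉ spectrum ℂ J) (hcJp : (c : ℂ) ∉ spectrum ℂ Jp)
    (hcJ2 : (c : ℂ) ∉ spectrum ℂ J2) (hcJ2p : (c : ℂ) ∉ spectrum ℂ J2p)
    (r φ r2 φ2 : ℝ)
    (hr : (r : ℂ) = ⟪(Ring.inverse (Jp - (c : ℂ) • 1)) f0, f0⟫_ℂ)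
    (hφ : φ = Real.arctan r)
    (hr2 : (r2 : ℂ) = ⟪(Ring.inverse (J2p - (c : ℂ) • 1)) f0, f0⟫_ℂ)
    (hφ2 : φ2 = Real.arctan r2)
    (κ κ2 : Hsp)
    (hκ : κ = (Ring.inverse (J - (c : ℂ) • 1))
      (((a 0 * Real.sin φ : ℝ) : ℂ) • eZ (-1) + ((Real.cos φ : ℝ) : ℂ) • eZ 0))
    (hκ2 : κ2 = (Ring.inverse (J2 - (c : ℂ) • 1))
      (((a2 0 * Real.sin φ2 : ℝ) : ℂ) • eZ (-1) + ((Real.cos φ2 : ℝ) : ℂ) • eZ 0)) :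
    ⟪(J - J2) κ, κ2⟫_ℂ = ((Real.sin (φ2 - φ) : ℝ) : ℂ) := by
  have hunitJ : IsUnit (J - (c : ℂ) • 1) := by
    rw [spectrum.notMem_iff] at hcJ
    have h2 := hcJ.neg
    rwa [neg_sub, Algebra.algebraMap_eq_smul_one] at h2
  have hunitJ2 : IsUnit (J2 - (c : ℂ) • 1) := by
    rw [spectrum.notMem_iff] at hcJ2
    have h2 := hcJ2.neg
    rwa [neg_sub, Algebra.algebraMap_eq_smul_one] at h2
  set g : Hplus := Ring.inverse (Jp - (c : ℂ) • 1) f0 with hgdef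
  set g2 : Hplus := Ring.inverse (J2p - (c : ℂ) • 1) f0 with hg2def
  obtain ⟨hg0, hgJ⟩ := key_g a b J hJsa hJ Jp hJp f0 hf0 c hcJp r hr g hgdef
  obtain ⟨hg20, hg2J⟩ := key_g a2 b2 J2 hJ2sa hJ2 J2p hJ2p f0 hf0 c hcJ2p r2 hr2 g2 hg2def
  have htrig : Real.cos φ * r = Real.sin φ := by
    rw [hφ, Real.cos_arctan, Real.sin_arctan]; ring
  have htrig2 : Real.cos φ2 * r2 = Real.sin φ2 := by
    rw [hφ2, Real.cos_arctan, Real.sin_arctan]; ring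
  -- κ = cos φ • g
  have hκg : κ = ((Real.cos φ : ℝ) : ℂ) • (g : Hsp) := by
    have h1 : (J - (c : ℂ) • 1) (((Real.cos φ : ℝ) : ℂ) • (g : Hsp)) =
        ((a 0 * Real.sin φ : ℝ) : ℂ) • eZ (-1) + ((Real.cos φ : ℝ) : ℂ) • eZ 0 := by
      rw [map_smul, hgJ, smul_add, smul_smul]
      congr 2
      rw [show (a 0 * Real.sin φ : ℝ) = Real.cos φ * (a 0 * r) by rw [← htrig]; ring]
      push_cast; ring
    rw [hκ, ← h1, ← ContinuousLinearMap.mul_apply, Ring.inverse_mul_cancel _ hunitJ,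
      ContinuousLinearMap.one_apply]
  have hκ2g : κ2 = ((Real.cos φ2 : ℝ) : ℂ) • (g2 : Hsp) := by
    have h1 : (J2 - (c : ℂ) • 1) (((Real.cos φ2 : ℝ) : ℂ) • (g2 : Hsp)) =
        ((a2 0 * Real.sin φ2 : ℝ) : ℂ) • eZ (-1) + ((Real.cos φ2 : ℝ) : ℂ) • eZ 0 := by
      rw [map_smul, hg2J, smul_add, smul_smul]
      congr 2
      rw [show (a2 0 * Real.sin φ2 : ℝ) = Real.cos φ2 * (a2 0 * r2) by rw [← htrig2]; ring]
      push_cast; ring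
    rw [hκ2, ← h1, ← ContinuousLinearMap.mul_apply, Ring.inverse_mul_cancel _ hunitJ2,
      ContinuousLinearMap.one_apply]
  have hJκ : (J - (c : ℂ) • 1) κ =
      ((a 0 * Real.sin φ : ℝ) : ℂ) • eZ (-1) + ((Real.cos φ : ℝ) : ℂ) • eZ 0 := by
    rw [hκ, ← ContinuousLinearMap.mul_apply, Ring.mul_inverse_cancel _ hunitJ,
      ContinuousLinearMap.one_apply]
  have hJ2κ2 : (J2 - (c : ℂ) • 1) κ2 =
      ((a2 0 * Real.sin φ2 : ℝ) : ℂ) • eZ (-1) + ((Real.cos φ2 : ℝ) : ℂ) • eZ 0 := by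
    rw [hκ2, ← ContinuousLinearMap.mul_apply, Ring.mul_inverse_cancel _ hunitJ2,
      ContinuousLinearMap.one_apply]
  have hsa2 : IsSelfAdjoint (J2 - (c : ℂ) • 1) := by
    refine hJ2sa.sub (IsSelfAdjoint.smul ?_ (IsSelfAdjoint.one _))
    exact Complex.conj_ofReal c
  have hsplit : ⟪(J - J2) κ, κ2⟫_ℂ
      = ⟪(J - (c : ℂ) • 1) κ, κ2⟫_ℂ - ⟪κ, (J2 - (c : ℂ) • 1) κ2⟫_ℂ := by
    have he : (J - J2) κ = (J - (c : ℂ) • 1) κ - (J2 - (c : ℂ) • 1) κ := by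
      simp only [ContinuousLinearMap.sub_apply, ContinuousLinearMap.smul_apply,
        ContinuousLinearMap.one_apply]
      abel
    rw [he, inner_sub_left]
    congr 1
    exact hsa2.isSymmetric κ κ2
  rw [hsplit, hJκ, hJ2κ2, hκg, hκ2g]
  have hgneg : (g : Hsp) (-1) = 0 := Hplus_apply_neg g.2 (by norm_num)
  have hg2neg : (g2 : Hsp) (-1) = 0 := Hplus_apply_neg g2.2 (by norm_num)
  simp only [inner_add_left, inner_add_right, inner_smul_left, inner_smul_right,
    inner_eZ, inner_eZ_right, lp.coeFn_smul, Pi.smul_apply, smul_eq_mul,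
    hgneg, hg2neg, hg0, hg20, map_mul, Complex.conj_ofReal, map_zero, mul_zero,
    zero_add, add_zero, zero_mul]
  rw [show Real.sin (φ2 - φ) = Real.cos φ * (Real.cos φ2 * r2) - Real.cos φ2 * (Real.cos φ * r) by
    rw [htrig, htrig2, Real.sin_sub]; ring]
  push_cast
  ring
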